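/- Let P ≪ Q be probability measures with β₁ = (ess sup dP/dQ)⁻¹ ∈ (0,1) and β₂ = ess inf dP/dQ ∈ [0,1). Then D(P‖Q) ≤ (1/2)·(φ(1/β₁) − φ(β₂))·|P−Q| (in nats), where φ(t) = t·ln(t)/(t−1) for t ∈ (0,1)∪(1,∞), φ(0) = 0, and φ(1) = 1. -/

import Mathlib

open MeasureTheory Set

/-- Chord inequality for the convex function `x ↦ x * log x`. -/
lemma chord_mul_log {a b t : ℝ} (ha : 0 ≤ a) (hab : a < b) (hat : a ≤ t) (htb : t ≤ b) :
    t * Real.log t ≤ ((b - t) / (b - a)) * (a * Real.log a)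
      + ((t - a) / (b - a)) * (b * Real.log b) := by
  have hba : (0:ℝ) < b - a := by linarith
  have h := Real.convexOn_mul_log.2 (mem_Ici.2 ha) (mem_Ici.2 (ha.trans hab.le))
    (show (0:ℝ) ≤ (b - t) / (b - a) from div_nonneg (by linarith) hba.le)
    (show (0:ℝ) ≤ (t - a) / (b - a) from div_nonneg (by linarith) hba.le)
    (show (b - t) / (b - a) + (t - a) / (b - a) = 1 by
      rw [← add_div, div_eq_one_iff_eq hba.ne']; ring)
  have hcomb : ((b - t) / (b - a)) • a + ((t - a) / (b - a)) • b = t := by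
    rw [smul_eq_mul, smul_eq_mul, div_mul_eq_mul_div, div_mul_eq_mul_div, ← add_div,
      div_eq_iff hba.ne']
    ring
  rw [hcomb] at h
  simpa [smul_eq_mul] using h

lemma mul_log_le_upper {M t : ℝ} (hM : 1 < M) (h1 : 1 ≤ t) (ht : t ≤ M) :
    t * Real.log t ≤ (M * Real.log M / (M - 1)) * (t - 1) := by
  have h := chord_mul_log (a := 1) (b := M) zero_le_one hM h1 ht
  simp only [Real.log_one, mul_zero, mul_one, zero_add] at h
  calc t * Real.log t ≤ ((t - 1) / (M - 1)) * (M * Real.log M) := h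
    _ = (M * Real.log M / (M - 1)) * (t - 1) := by ring

lemma mul_log_le_lower {m t : ℝ} (hm0 : 0 ≤ m) (hm1 : m < 1) (hmt : m ≤ t) (ht : t ≤ 1) :
    t * Real.log t ≤ (m * Real.log m / (m - 1)) * (t - 1) := by
  have h := chord_mul_log (a := m) (b := 1) hm0 hm1 hmt ht
  simp only [Real.log_one, mul_zero, mul_one, add_zero] at h
  have hm1' : m - 1 ≠ 0 := by linarith
  have h1m : (1:ℝ) - m ≠ 0 := by linarith
  calc t * Real.log t ≤ ((1 - t) / (1 - m)) * (m * Real.log m) := h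
    _ = (m * Real.log m / (m - 1)) * (t - 1) := by field_simp; ring

theorem reverse_Pinsker_phi {α : Type*} [MeasurableSpace α] (P Q : Measure α)
    [IsProbabilityMeasure P] [IsProbabilityMeasure Q] (hPQ : P ≪ Q)
    (hM : 1 < essSup (P.rnDeriv Q) Q) (hM' : essSup (P.rnDeriv Q) Q ≠ ⊤)
    (hm : essInf (P.rnDeriv Q) Q < 1)
    (φ : ℝ → ℝ) (hφ0 : φ 0 = 0) (hφ1 : φ 1 = 1)
    (hφ : ∀ t : ℝ, 0 < t → t ≠ 1 → φ t = t * Real.log t / (t - 1)) :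
    ∫ x, Real.log ((P.rnDeriv Q x).toReal) ∂P
      ≤ (1/2) * (φ ((essSup (P.rnDeriv Q) Q).toReal) - φ ((essInf (P.rnDeriv Q) Q).toReal))
        * ∫ x, |(P.rnDeriv Q x).toReal - 1| ∂Q := by
  set g : α → ℝ := fun x => (P.rnDeriv Q x).toReal with hgdef
  set Mr : ℝ := (essSup (P.rnDeriv Q) Q).toReal with hMrdef
  set mr : ℝ := (essInf (P.rnDeriv Q) Q).toReal with hmrdef
  have hgm : Measurable g := (Measure.measurable_rnDeriv P Q).ennreal_toReal
  have hMr : 1 < Mr := by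
    have := ENNReal.toReal_strict_mono hM' hM
    simpa using this
  have hmr1 : mr < 1 := by
    have := ENNReal.toReal_strict_mono (show (1:ENNReal) ≠ ⊤ by simp) hm
    simpa using this
  have hmr0 : 0 ≤ mr := ENNReal.toReal_nonneg
  -- a.e. bounds
  have hub : ∀ᵐ x ∂Q, g x ≤ Mr := by
    filter_upwards [ae_le_essSup (f := P.rnDeriv Q) (μ := Q), Measure.rnDeriv_lt_top P Q]
      with x h1 h2
    exact ENNReal.toReal_le_toReal h2.ne hM' |>.mpr h1
  have hlb : ∀ᵐ x ∂Q, mr ≤ g x := by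
    filter_upwards [ae_essInf_le (f := P.rnDeriv Q) (μ := Q), Measure.rnDeriv_lt_top P Q]
      with x h1 h2
    exact ENNReal.toReal_le_toReal (hm.trans (by simp)).ne h2.ne |>.mpr h1
  have hgnn : ∀ x, 0 ≤ g x := fun x => ENNReal.toReal_nonneg
  -- integrability
  have hint_g : Integrable g Q := by
    refine Integrable.mono' (integrable_const Mr) hgm.aestronglyMeasurable ?_
    filter_upwards [hub] with x h
    rw [Real.norm_eq_abs, abs_of_nonneg (hgnn x)]; exact h
  have hint_sub : Integrable (fun x => g x - 1) Q := hint_g.sub (integrable_const 1)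
  have hint_abs : Integrable (fun x => |g x - 1|) Q := hint_sub.abs
  have hint_max : Integrable (fun x => max (g x - 1) 0) Q := by
    refine Integrable.mono' hint_abs
      ((hgm.sub measurable_const).max measurable_const).aestronglyMeasurable ?_
    filter_upwards with x
    rw [Real.norm_eq_abs, abs_of_nonneg (le_max_right _ _)]
    exact max_le (le_abs_self _) (abs_nonneg _)
  have hint_min : Integrable (fun x => min (g x - 1) 0) Q := by
    refine Integrable.mono' hint_abs
      ((hgm.sub measurable_const).min measurable_const).aestronglyMeasurable ?_
    filter_upwards with x
    rcases le_total (g x - 1) 0 with h | h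
    · rw [min_eq_left h, Real.norm_eq_abs, abs_of_nonpos h]
    · rw [min_eq_right h, Real.norm_eq_abs, abs_zero]; exact abs_nonneg _
  have hint_mll : Integrable (fun x => g x * Real.log (g x)) Q := by
    refine Integrable.mono' (integrable_const (max 1 (Mr * Real.log Mr)))
      (hgm.mul (Real.measurable_log.comp hgm)).aestronglyMeasurable ?_
    filter_upwards [hub] with x hx
    rw [Real.norm_eq_abs]
    rcases le_total (g x) 1 with h | h
    · refine le_trans ?_ (le_max_left _ _)
      rw [abs_of_nonpos (Real.mul_log_nonpos (hgnn x) h)]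
      rcases eq_or_lt_of_le (hgnn x) with h0 | h0
      · simp [← h0]
      · have hlog : Real.log (g x)⁻¹ ≤ (g x)⁻¹ - 1 :=
          Real.log_le_sub_one_of_pos (by positivity)
        rw [Real.log_inv] at hlog
        have := mul_le_mul_of_nonneg_left hlog (hgnn x)
        rw [mul_sub, mul_inv_cancel₀ h0.ne'] at this
        nlinarith
    · refine le_trans ?_ (le_max_right _ _)
      have hlgnn : 0 ≤ Real.log (g x) := Real.log_nonneg h
      rw [abs_of_nonneg (mul_nonneg (hgnn x) hlgnn)]
      have hlog_le : Real.log (g x) ≤ Real.log Mr :=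
        Real.log_le_log (by linarith) hx
      exact mul_le_mul hx hlog_le hlgnn (by linarith)
  -- change of measure on the left
  have hconv : ∫ x, Real.log (g x) ∂P = ∫ x, g x * Real.log (g x) ∂Q := by
    rw [← integral_rnDeriv_smul hPQ (f := fun x => Real.log (g x))]
    simp [smul_eq_mul, hgdef]
  -- integral identities
  have hQ1 : ∫ (_ : α), (1:ℝ) ∂Q = 1 := by simp
  have hQg : ∫ x, g x ∂Q = 1 := by
    rw [hgdef]
    rw [Measure.integral_toReal_rnDeriv hPQ]
    simp
  have hsub0 : ∫ x, (g x - 1) ∂Q = 0 := by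
    rw [integral_sub hint_g (integrable_const 1), hQg, hQ1, sub_self]
  set T : ℝ := ∫ x, |g x - 1| ∂Q with hT
  have hmax_int : ∫ x, max (g x - 1) 0 ∂Q = T / 2 := by
    have hfe : (fun x => max (g x - 1) 0) = fun x => ((g x - 1) + |g x - 1|) / 2 := by
      funext x
      rcases le_total (g x - 1) 0 with h | h
      · rw [max_eq_right h, abs_of_nonpos h]; ring
      · rw [max_eq_left h, abs_of_nonneg h]; ring
    rw [hfe]
    rw [integral_div, integral_add hint_sub hint_abs, hsub0, zero_add]
  have hmin_int : ∫ x, min (g x - 1) 0 ∂Q = -(T / 2) := by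
    have hfe : (fun x => min (g x - 1) 0) = fun x => ((g x - 1) - |g x - 1|) / 2 := by
      funext x
      rcases le_total (g x - 1) 0 with h | h
      · rw [min_eq_left h, abs_of_nonpos h]; ring
      · rw [min_eq_right h, abs_of_nonneg h]; ring
    rw [hfe]
    rw [integral_div, integral_sub hint_sub hint_abs, hsub0, zero_sub, neg_div]
  -- values of φ
  have hφM : φ Mr = Mr * Real.log Mr / (Mr - 1) := hφ Mr (by linarith) (by linarith)
  have hφm : φ mr = mr * Real.log mr / (mr - 1) := by
    rcases eq_or_lt_of_le hmr0 with h0 | h0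
    · rw [← h0, hφ0]; simp
    · exact hφ mr h0 (by linarith)
  -- pointwise bound
  have hpt : ∀ᵐ x ∂Q, g x * Real.log (g x)
      ≤ (φ Mr) * max (g x - 1) 0 + (φ mr) * min (g x - 1) 0 := by
    filter_upwards [hub, hlb] with x hxu hxl
    rcases le_total 1 (g x) with h | h
    · rw [max_eq_left (by linarith), min_eq_right (by linarith), mul_zero, add_zero, hφM]
      exact mul_log_le_upper hMr h hxu
    · rw [max_eq_right (by linarith), min_eq_left (by linarith), mul_zero, zero_add, hφm]
      exact mul_log_le_lower hmr0 hmr1 hxl h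
  have hint_rhs : Integrable
      (fun x => (φ Mr) * max (g x - 1) 0 + (φ mr) * min (g x - 1) 0) Q :=
    (hint_max.const_mul _).add (hint_min.const_mul _)
  have hmono := integral_mono_ae hint_mll hint_rhs hpt
  rw [integral_add (hint_max.const_mul _) (hint_min.const_mul _),
    integral_const_mul, integral_const_mul, hmax_int, hmin_int] at hmono
  rw [hconv]
  calc ∫ x, g x * Real.log (g x) ∂Q
      ≤ φ Mr * (T / 2) + φ mr * -(T / 2) := hmono
    _ = 1 / 2 * (φ Mr - φ mr) * T := by ring
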